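/- Let $\psi : (0,\infty) \to \mathbb{R}$ be continuously differentiable with $e^{-\psi}$ a probability density, and suppose $\beta \geq 1$ satisfies $\psi'(y) \leq -\beta y^{-3}$ for all $0 < y \leq \beta^{-1}$. Then $\int_0^{(2\beta)^{-1}} |\log y|\, e^{-\psi(y)}\,dy \leq \frac{1}{2}\beta^{-2}$. -/

import Mathlib

open MeasureTheory Set

/-- If `e^{-ψ}` is a probability density on `(0,∞)`, `ψ` is continuously differentiable there,
`β ≥ 1`, and `ψ'(y) ≤ -β y⁻³` for `0 < y ≤ β⁻¹`, then
`∫_0^{(2β)⁻¹} |log y| e^{-ψ(y)} dy ≤ β⁻²/2`. -/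
theorem stmt_2 (ψ : ℝ → ℝ) (β : ℝ) (hβ : 1 ≤ β)
    (hsmooth : ContDiffOn ℝ 1 ψ (Ioi 0))
    (hdens : ∫ y in Ioi (0 : ℝ), Real.exp (-ψ y) = 1)
    (hderiv : ∀ y : ℝ, 0 < y → y ≤ β⁻¹ → deriv ψ y ≤ -(β * (y⁻¹ ^ 3))) :
    ∫ y in Ioo (0 : ℝ) (2 * β)⁻¹, |Real.log y| * Real.exp (-ψ y) ≤ β⁻¹ ^ 2 / 2 := by
  have hβ0 : (0:ℝ) < β := lt_of_lt_of_le one_pos hβ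
  set c : ℝ := (2*β)⁻¹ with hc
  have hc0 : 0 < c := by positivity
  have hcβ : c < β⁻¹ := by
    rw [hc, inv_lt_inv₀ (by positivity) (by positivity)]
    linarith
  have hc1 : c ≤ 1/2 := by
    rw [hc]
    rw [inv_le_comm₀ (by positivity) (by norm_num)]
    linarith
  -- continuity and differentiability facts
  have hψcont : ContinuousOn ψ (Ioi 0) := hsmooth.continuousOn
  have hψdcont : ContinuousOn (deriv ψ) (Ioi 0) :=
    hsmooth.continuousOn_deriv_of_isOpen isOpen_Ioi le_rfl
  have hdiff : ∀ y ∈ Ioi (0:ℝ), HasDerivAt ψ (deriv ψ y) y := by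
    intro y hy
    exact ((hsmooth.differentiableOn one_ne_zero).differentiableAt
      (isOpen_Ioi.mem_nhds hy)).hasDerivAt
  -- integrability of the density
  have hFint : IntegrableOn (fun y => Real.exp (-ψ y)) (Ioi 0) := by
    by_contra h
    rw [integral_undef h] at hdens
    norm_num at hdens
  -- `exp (-ψ c) ≤ 2β`
  have hanti : StrictAntiOn ψ (Icc c β⁻¹) := by
    apply strictAntiOn_of_deriv_neg (convex_Icc _ _)
      (hψcont.mono (fun x hx => lt_of_lt_of_le hc0 hx.1))
    intro x hx
    rw [interior_Icc] at hx
    have hx0 : 0 < x := lt_trans hc0 hx.1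
    have h1 := hderiv x hx0 hx.2.le
    have h2 : 0 < β * (x⁻¹ ^ 3) := by positivity
    linarith
  have hexpc : Real.exp (-ψ c) ≤ 2 * β := by
    have hmono : ∀ y ∈ Ioc c β⁻¹, Real.exp (-ψ c) ≤ Real.exp (-ψ y) := by
      intro y hy
      have : ψ y ≤ ψ c := (hanti ⟨le_rfl, hcβ.le⟩ ⟨hy.1.le, hy.2⟩ hy.1).le
      exact Real.exp_le_exp.2 (by linarith)
    have h1 : ∫ _ in Ioc c β⁻¹, Real.exp (-ψ c) ≤ ∫ y in Ioc c β⁻¹, Real.exp (-ψ y) := by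
      apply setIntegral_mono_on
      · exact integrableOn_const (by rw [Real.volume_Ioc]; exact ENNReal.ofReal_ne_top)
      · exact hFint.mono_set (fun x hx => lt_trans hc0 hx.1)
      · exact measurableSet_Ioc
      · exact hmono
    have h2 : ∫ y in Ioc c β⁻¹, Real.exp (-ψ y) ≤ 1 := by
      rw [← hdens]
      exact setIntegral_mono_set hFint (ae_of_all _ fun y => (Real.exp_pos _).le)
        (HasSubset.Subset.eventuallyLE (fun x hx => lt_trans hc0 hx.1))
    rw [setIntegral_const, measureReal_def, Real.volume_Ioc, ENNReal.toReal_ofReal (by linarith)] at h1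
    have hdiffc : β⁻¹ - c = c := by rw [hc]; field_simp; ring
    rw [hdiffc, smul_eq_mul] at h1
    have h3 : c * Real.exp (-ψ c) ≤ 1 := le_trans h1 h2
    have h4 : c * (2*β) = 1 := by rw [hc]; field_simp
    nlinarith [Real.exp_pos (-ψ c)]
  -- main estimate on `Ioo a c`
  have key : ∀ a : ℝ, 0 < a → a < c →
      ∫ y in Ioo a c, |Real.log y| * Real.exp (-ψ y) ≤ β⁻¹ ^ 2 / 2 := by
    intro a ha hac
    have hsub : Icc a c ⊆ Ioi 0 := fun x hx => lt_of_lt_of_le ha hx.1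
    have hcont1 : ContinuousOn (fun y => |Real.log y| * Real.exp (-ψ y)) (Icc a c) := by
      apply ContinuousOn.mul
      · exact ContinuousOn.abs (fun x hx =>
          (Real.continuousAt_log (ne_of_gt (lt_of_lt_of_le ha hx.1))).continuousWithinAt)
      · exact Real.continuous_exp.comp_continuousOn ((hψcont.mono hsub).neg)
    have hcont2 : ContinuousOn (fun y => Real.exp (-ψ y) * (-deriv ψ y)) (Icc a c) :=
      (Real.continuous_exp.comp_continuousOn ((hψcont.mono hsub).neg)).mul
        ((hψdcont.mono hsub).neg)
    have hftc : ∫ y in a..c, Real.exp (-ψ y) * (-deriv ψ y)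
        = Real.exp (-ψ c) - Real.exp (-ψ a) := by
      refine intervalIntegral.integral_eq_sub_of_hasDerivAt
        (f := fun y => Real.exp (-ψ y)) ?_ ?_
      · intro x hx
        rw [uIcc_of_le hac.le] at hx
        exact ((hdiff x (hsub hx)).neg).exp
      · exact ContinuousOn.intervalIntegrable (by rw [uIcc_of_le hac.le]; exact hcont2)
    have hpt : ∀ y ∈ Ioo a c, |Real.log y| * Real.exp (-ψ y)
        ≤ β⁻¹ * c^2 * (Real.exp (-ψ y) * (-deriv ψ y)) := by
      intro y hy
      have hy0 : 0 < y := lt_trans ha hy.1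
      have hd := hderiv y hy0 (le_of_lt (lt_trans hy.2 hcβ))
      have hlog : |Real.log y| ≤ y⁻¹ := by
        rw [abs_of_nonpos (Real.log_nonpos hy0.le (by linarith [hy.2] : y ≤ 1))]
        have h5 := Real.log_le_sub_one_of_pos (inv_pos.2 hy0)
        rw [Real.log_inv] at h5
        linarith
      have hy3 : 0 < y⁻¹^3 := by positivity
      have hstep : y⁻¹ ≤ β⁻¹ * c^2 * (-deriv ψ y) := by
        have h1 : β * y⁻¹^3 ≤ -deriv ψ y := by linarith
        have h2 : y⁻¹ = y^2 * y⁻¹^3 := by field_simp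
        have h3 : y^2 ≤ c^2 := by nlinarith [hy.2]
        calc y⁻¹ = y^2 * y⁻¹^3 := h2
        _ ≤ c^2 * y⁻¹^3 := by nlinarith
        _ = β⁻¹ * c^2 * (β * y⁻¹^3) := by field_simp
        _ ≤ β⁻¹ * c^2 * (-deriv ψ y) := by
            apply mul_le_mul_of_nonneg_left h1 (by positivity)
      calc |Real.log y| * Real.exp (-ψ y) ≤ y⁻¹ * Real.exp (-ψ y) :=
            mul_le_mul_of_nonneg_right hlog (Real.exp_pos _).le
      _ ≤ (β⁻¹ * c^2 * (-deriv ψ y)) * Real.exp (-ψ y) :=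
            mul_le_mul_of_nonneg_right hstep (Real.exp_pos _).le
      _ = β⁻¹ * c^2 * (Real.exp (-ψ y) * (-deriv ψ y)) := by ring
    calc ∫ y in Ioo a c, |Real.log y| * Real.exp (-ψ y)
        ≤ ∫ y in Ioo a c, β⁻¹ * c^2 * (Real.exp (-ψ y) * (-deriv ψ y)) := by
          apply setIntegral_mono_on
          · exact (hcont1.integrableOn_Icc).mono_set Ioo_subset_Icc_self
          · exact ((hcont2.integrableOn_Icc).mono_set Ioo_subset_Icc_self).const_mul _
          · exact measurableSet_Ioo
          · exact hpt
      _ = β⁻¹ * c^2 * ∫ y in Ioo a c, Real.exp (-ψ y) * (-deriv ψ y) :=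
          integral_const_mul _ _
      _ = β⁻¹ * c^2 * (Real.exp (-ψ c) - Real.exp (-ψ a)) := by
          rw [← integral_Ioc_eq_integral_Ioo, ← intervalIntegral.integral_of_le hac.le, hftc]
      _ ≤ β⁻¹ * c^2 * (2*β) := by
          apply mul_le_mul_of_nonneg_left _ (by positivity)
          have := Real.exp_pos (-ψ a); linarith
      _ = β⁻¹ ^ 2 / 2 := by rw [hc]; field_simp
  -- conclusion via monotone convergence
  by_cases hint : IntegrableOn (fun y => |Real.log y| * Real.exp (-ψ y)) (Ioo 0 c)
  · have hUnion : (⋃ n : ℕ, Ioo (c/(n+2)) c) = Ioo 0 c := by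
      ext x
      simp only [mem_iUnion, mem_Ioo]
      constructor
      · rintro ⟨n, h1, h2⟩
        exact ⟨lt_trans (by positivity) h1, h2⟩
      · rintro ⟨h1, h2⟩
        obtain ⟨n, hn⟩ := exists_nat_gt (c / x)
        refine ⟨n, ?_, h2⟩
        rw [div_lt_iff₀ (by positivity)]
        rw [div_lt_iff₀ h1] at hn
        nlinarith
    have hmono : Monotone (fun n : ℕ => Ioo (c/((n:ℝ)+2)) c) := by
      intro n m hnm
      apply Ioo_subset_Ioo_left
      have hnm' : (n:ℝ) ≤ m := Nat.cast_le.2 hnm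
      gcongr
    have htend := tendsto_setIntegral_of_monotone (μ := volume)
      (f := fun y => |Real.log y| * Real.exp (-ψ y))
      (fun n : ℕ => measurableSet_Ioo) hmono (by rw [hUnion]; exact hint)
    rw [hUnion] at htend
    refine le_of_tendsto htend (Filter.Eventually.of_forall (fun n => ?_))
    apply key
    · positivity
    · apply div_lt_self hc0
      have : (0:ℝ) ≤ (n:ℝ) := Nat.cast_nonneg n
      linarith
  · rw [integral_undef hint]
    positivity
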